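/- For $1 < p < \infty$, $0 < \lambda < n$, nonnegative $f \in L^{p,\lambda}(\mathbb{R}^n)$ and nonnegative $g \in H^{p',\lambda}(\mathbb{R}^n)$ with $1/p + 1/p' = 1$, one has $\int_{\mathbb{R}^n} f(x) g(x)\,dx \le C\,\|f\|_{L^{p,\lambda}} \|g\|_{H^{p',\lambda}}$ with constant $C$ depending only on $n, p, \lambda$. -/

import Mathlib

open MeasureTheory ENNReal Set

noncomputable section

/-- Axis-parallel cube with lower corner `c` and side length `h`. -/
def Cube (n : ℕ) (c : Fin n → ℝ) (h : ℝ) : Set (Fin n → ℝ) :=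
  {x | ∀ i, c i ≤ x i ∧ x i ≤ c i + h}

/-- `λ`-dimensional Hausdorff content, via countable coverings by cubes. -/
def hausdorffContent (n : ℕ) (lam : ℝ) (E : Set (Fin n → ℝ)) : ℝ≥0∞ :=
  ⨅ (c : ℕ → Fin n → ℝ) (h : ℕ → ℝ) (_ : ∀ j, 0 < h j)
    (_ : E ⊆ ⋃ j, Cube n (c j) (h j)), ∑' j, ENNReal.ofReal (h j) ^ lam

/-- Choquet integral of an `ℝ≥0∞`-valued function against the Hausdorff content `H^λ`. -/
def choquetE (n : ℕ) (lam : ℝ) (φ : (Fin n → ℝ) → ℝ≥0∞) : ℝ≥0∞ :=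
  ∫⁻ t in Set.Ioi (0:ℝ), hausdorffContent n lam {y | ENNReal.ofReal t < φ y}

/-- Choquet integral of a real-valued function against the Hausdorff content `H^λ`. -/
def choquet (n : ℕ) (lam : ℝ) (φ : (Fin n → ℝ) → ℝ) : ℝ≥0∞ :=
  ∫⁻ t in Set.Ioi (0:ℝ), hausdorffContent n lam {y | t < φ y}

/-- The Morrey norm `‖f‖_{L^{p,λ}}`. -/
def morreyNorm (n : ℕ) (p lam : ℝ) (f : (Fin n → ℝ) → ℝ) : ℝ≥0∞ :=
  ⨆ (c : Fin n → ℝ) (h : ℝ) (_ : 0 < h),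
    ((∫⁻ x in Cube n c h, ENNReal.ofReal |f x| ^ p) / ENNReal.ofReal h ^ lam) ^ (1/p)

/-- The weighted Morrey norm of an `ℝ≥0∞`-valued function. -/
def morreyNormWE (n : ℕ) (p lam : ℝ) (w : (Fin n → ℝ) → ℝ) (f : (Fin n → ℝ) → ℝ≥0∞) : ℝ≥0∞ :=
  ⨆ (c : Fin n → ℝ) (h : ℝ) (_ : 0 < h),
    ((∫⁻ x in Cube n c h, f x ^ p * ENNReal.ofReal (w x)) / ENNReal.ofReal h ^ lam) ^ (1/p)

/-- The weighted Morrey norm `‖f‖_{L^{p,λ}(w)}`. -/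
def morreyNormW (n : ℕ) (p lam : ℝ) (w f : (Fin n → ℝ) → ℝ) : ℝ≥0∞ :=
  morreyNormWE n p lam w (fun x => ENNReal.ofReal |f x|)

/-- The Hardy–Littlewood maximal operator (over axis-parallel cubes). -/
def maximalFn (n : ℕ) (f : (Fin n → ℝ) → ℝ) (x : Fin n → ℝ) : ℝ≥0∞ :=
  ⨆ (c : Fin n → ℝ) (h : ℝ) (_ : 0 < h) (_ : x ∈ Cube n c h),
    (∫⁻ y in Cube n c h, ENNReal.ofReal |f y|) / ENNReal.ofReal (h ^ n)

/-- A weight: a nonnegative locally integrable function positive on a set of positive measure. -/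
def IsWeight (n : ℕ) (w : (Fin n → ℝ) → ℝ) : Prop :=
  Measurable w ∧ (∀ x, 0 ≤ w x) ∧ LocallyIntegrable w volume ∧ 0 < volume {x | 0 < w x}

/-- Muckenhoupt `A₁` weight with constant `C`. -/
def IsA1 (n : ℕ) (C : ℝ≥0∞) (w : (Fin n → ℝ) → ℝ) : Prop :=
  IsWeight n w ∧ ∀ᵐ x ∂(volume : Measure (Fin n → ℝ)), maximalFn n w x ≤ C * ENNReal.ofReal (w x)

/-- The basis `𝓑_λ`: `A₁` weights with Choquet integral against `H^λ` at most one. -/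
def MorreyBasis (n : ℕ) (lam : ℝ) : Set ((Fin n → ℝ) → ℝ) :=
  {b | (∃ C : ℝ≥0∞, C ≠ ⊤ ∧ IsA1 n C b) ∧ choquet n lam b ≤ 1}

/-- The norm of the space `H^{q,λ}`; note `b^{-q/q'} = b^{-(q-1)}`. -/
def hNorm (n : ℕ) (q lam : ℝ) (g : (Fin n → ℝ) → ℝ) : ℝ≥0∞ :=
  ⨅ (b : (Fin n → ℝ) → ℝ) (_ : b ∈ MorreyBasis n lam),
    (∫⁻ x, ENNReal.ofReal |g x| ^ q * ENNReal.ofReal (b x) ^ (-(q - 1))) ^ (1/q)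
/-- Euclidean norm on `Fin n → ℝ`. -/
def euclidNorm (n : ℕ) (x : Fin n → ℝ) : ℝ := Real.sqrt (∑ i, x i ^ 2)

/-- A `(p,λ)`-atom: supported in a cube `Q` with `‖a‖_{L^p} ≤ l(Q)^{-λ/p'}`. -/
def IsPLAtom (n : ℕ) (p lam : ℝ) (a : (Fin n → ℝ) → ℝ) : Prop :=
  Measurable a ∧ ∃ (c : Fin n → ℝ) (h : ℝ), 0 < h ∧ (∀ x ∉ Cube n c h, a x = 0) ∧
    (∫⁻ x, ENNReal.ofReal |a x| ^ p) ^ (1/p) ≤ ENNReal.ofReal h ^ (-(lam * (p - 1) / p))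

/-- The block space norm `‖f‖_{B^{p,λ}}`. -/
def blockNorm (n : ℕ) (p lam : ℝ) (f : (Fin n → ℝ) → ℝ) : ℝ≥0∞ :=
  ⨅ (cs : ℕ → ℝ) (a : ℕ → (Fin n → ℝ) → ℝ) (_ : ∀ k, IsPLAtom n p lam (a k))
    (_ : ∀ x, HasSum (fun k => cs k * a k x) (f x)),
    ∑' k, ENNReal.ofReal |cs k|

/-- The dyadic cube `2^{-k}(m + [0,1)^n)`. -/
def DCube (n : ℕ) (k : ℤ) (m : Fin n → ℤ) : Set (Fin n → ℝ) :=
  {x | ∀ i, (m i : ℝ) * (2:ℝ) ^ (-k) ≤ x i ∧ x i < ((m i : ℝ) + 1) * (2:ℝ) ^ (-k)}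

/-- The dyadic maximal operator with respect to a measure `μ`. -/
def dyadicMaximal (n : ℕ) (μ : Measure (Fin n → ℝ)) (f : (Fin n → ℝ) → ℝ)
    (x : Fin n → ℝ) : ℝ≥0∞ :=
  ⨆ (k : ℤ) (m : Fin n → ℤ) (_ : x ∈ DCube n k m),
    (∫⁻ y in DCube n k m, ENNReal.ofReal |f y| ∂μ) / μ (DCube n k m)

/-- The `L^p(μ)`-norm (with `p ∈ (0,∞]`) of an `ℝ≥0∞`-valued function. -/
def lpNormE {α : Type*} [MeasurableSpace α] (μ : Measure α) (p : ℝ≥0∞) (g : α → ℝ≥0∞) : ℝ≥0∞ :=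
  if p = ⊤ then essSup g μ else (∫⁻ x, g x ^ p.toReal ∂μ) ^ (1 / p.toReal)

/-- Content normalized on balls: the infimum of `ρ^λ` over balls `{|x| < ρ}` containing `E`. -/
def ballContent (n : ℕ) (lam : ℝ) (E : Set (Fin n → ℝ)) : ℝ≥0∞ :=
  ⨅ (ρ : ℝ) (_ : 0 ≤ ρ) (_ : E ⊆ {x | euclidNorm n x < ρ}), ENNReal.ofReal ρ ^ lam

/-- Choquet integral against the ball-normalized content. -/
def ballChoquet (n : ℕ) (lam : ℝ) (φ : (Fin n → ℝ) → ℝ) : ℝ≥0∞ :=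
  ∫⁻ t in Set.Ioi (0:ℝ), ballContent n lam {y | t < φ y}

/-- The `μ`-average of `g` over a dyadic cube (indexed by a pair `(k,m)`). -/
def dAvg (n : ℕ) (μ : Measure (Fin n → ℝ)) (g : (Fin n → ℝ) → ℝ)
    (Q : ℤ × (Fin n → ℤ)) : ℝ≥0∞ :=
  (∫⁻ y in DCube n Q.1 Q.2, ENNReal.ofReal (g y) ∂μ) / μ (DCube n Q.1 Q.2)

/-- `Q` is a stopping child of `F`: a maximal dyadic cube inside `F` whose `μ`-average of `g`
exceeds twice that of `F`. -/
def IsPChild (n : ℕ) (μ : Measure (Fin n → ℝ)) (g : (Fin n → ℝ) → ℝ)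
    (F Q : ℤ × (Fin n → ℤ)) : Prop :=
  DCube n Q.1 Q.2 ⊆ DCube n F.1 F.2 ∧ 2 * dAvg n μ g F < dAvg n μ g Q ∧
    ∀ Q' : ℤ × (Fin n → ℤ), DCube n Q.1 Q.2 ⊆ DCube n Q'.1 Q'.2 →
      DCube n Q'.1 Q'.2 ⊆ DCube n F.1 F.2 → 2 * dAvg n μ g F < dAvg n μ g Q' →
      DCube n Q'.1 Q'.2 = DCube n Q.1 Q.2

/-- The collection of principal cubes generated from `Q0`. -/
inductive Principal (n : ℕ) (μ : Measure (Fin n → ℝ)) (g : (Fin n → ℝ) → ℝ)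
    (Q0 : ℤ × (Fin n → ℤ)) : ℤ × (Fin n → ℤ) → Prop
  | base : Principal n μ g Q0 Q0
  | child (F Q : ℤ × (Fin n → ℤ)) : Principal n μ g Q0 F → IsPChild n μ g F Q →
      Principal n μ g Q0 Q

/-- The set `E_𝓕(F) = F \ ⋃_{F' ∈ ch_𝓕(F)} F'`. -/
def PrincipalRest (n : ℕ) (μ : Measure (Fin n → ℝ)) (g : (Fin n → ℝ) → ℝ)
    (F : ℤ × (Fin n → ℤ)) : Set (Fin n → ℝ) :=
  DCube n F.1 F.2 \ ⋃ (Q : ℤ × (Fin n → ℤ)) (_ : IsPChild n μ g F Q), DCube n Q.1 Q.2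

section AuxHolder

open Filter

lemma cube_eq_pi (n : ℕ) (c : Fin n → ℝ) (h : ℝ) :
    Cube n c h = Set.pi Set.univ (fun i => Set.Icc (c i) (c i + h)) := by
  ext x; simp [Cube, Set.mem_pi, Set.mem_Icc, Pi.le_def, forall_and]

lemma measurableSet_cube (n : ℕ) (c : Fin n → ℝ) (h : ℝ) : MeasurableSet (Cube n c h) := by
  rw [cube_eq_pi]
  exact MeasurableSet.univ_pi fun i => measurableSet_Icc

lemma volume_cube (n : ℕ) (c : Fin n → ℝ) (h : ℝ) :
    volume (Cube n c h) = ENNReal.ofReal h ^ (n : ℕ) := by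
  rw [cube_eq_pi, volume_pi_pi]
  simp [Real.volume_Icc]

lemma hausdorffContent_mono {n : ℕ} {lam : ℝ} {S T : Set (Fin n → ℝ)} (hST : S ⊆ T) :
    hausdorffContent n lam S ≤ hausdorffContent n lam T := by
  refine le_iInf fun c => le_iInf fun h => le_iInf fun hpos => le_iInf fun hcov => ?_
  exact iInf_le_of_le c (iInf_le_of_le h (iInf_le_of_le hpos (iInf_le _ (hST.trans hcov))))

lemma ennreal_rpow_le_rpow_of_nonpos {x y : ℝ≥0∞} {z : ℝ} (hxy : x ≤ y) (hz : z ≤ 0) :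
    y ^ z ≤ x ^ z := by
  rw [← neg_neg z, ENNReal.rpow_neg y, ENNReal.rpow_neg x]
  exact ENNReal.inv_le_inv.2 (ENNReal.rpow_le_rpow hxy (neg_nonneg.2 hz))

lemma volume_le_rpow_content {n : ℕ} {lam : ℝ} (h1 : 0 < lam) (h2 : lam < n)
    (S : Set (Fin n → ℝ)) :
    volume S ≤ (hausdorffContent n lam S) ^ ((n : ℝ) / lam) := by
  have hn : (0:ℝ) < n := h1.trans h2
  have hprod : lam / (n:ℝ) * ((n:ℝ) / lam) = 1 := by field_simp
  have key : (volume S) ^ (lam / (n:ℝ)) ≤ hausdorffContent n lam S := by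
    refine le_iInf fun c => le_iInf fun h => le_iInf fun hpos => le_iInf fun hcov => ?_
    set T := ∑' j, ENNReal.ofReal (h j) ^ lam with hT
    have hvol : volume S ≤ T ^ ((n:ℝ) / lam) := by
      rcases eq_or_ne T ⊤ with htop | htop
      · rw [htop, ENNReal.top_rpow_of_pos (by positivity)]; exact le_top
      have haj : ∀ j, ENNReal.ofReal (h j) ^ lam ≠ 0 ∧ ENNReal.ofReal (h j) ^ lam ≠ ⊤ := by
        intro j
        exact ⟨(ENNReal.rpow_pos (ENNReal.ofReal_pos.2 (hpos j)) ENNReal.ofReal_ne_top).ne',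
          (ENNReal.rpow_lt_top_of_nonneg h1.le ENNReal.ofReal_ne_top).ne⟩
      have hT0 : T ≠ 0 := by
        intro h0
        exact (haj 0).1 (by simpa using (ENNReal.tsum_eq_zero.mp h0) 0)
      have hexp : (0:ℝ) ≤ (n:ℝ)/lam - 1 := by
        rw [sub_nonneg]
        exact (one_le_div h1).2 h2.le
      calc volume S ≤ volume (⋃ j, Cube n (c j) (h j)) := measure_mono hcov
        _ ≤ ∑' j, volume (Cube n (c j) (h j)) := measure_iUnion_le _
        _ = ∑' j, (ENNReal.ofReal (h j) ^ lam) ^ ((n:ℝ)/lam) := by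
            refine tsum_congr fun j => ?_
            rw [volume_cube, ← ENNReal.rpow_natCast, ← ENNReal.rpow_mul]
            congr 1
            field_simp
        _ ≤ ∑' j, T ^ ((n:ℝ)/lam - 1) * (ENNReal.ofReal (h j) ^ lam) := by
            refine ENNReal.tsum_le_tsum fun j => ?_
            have hle : ENNReal.ofReal (h j) ^ lam ≤ T := ENNReal.le_tsum j
            have e1 : (ENNReal.ofReal (h j) ^ lam) ^ ((n:ℝ)/lam)
                = (ENNReal.ofReal (h j) ^ lam) ^ ((n:ℝ)/lam - 1)
                  * (ENNReal.ofReal (h j) ^ lam) := by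
              conv_lhs => rw [show (n:ℝ)/lam = ((n:ℝ)/lam - 1) + 1 by ring]
              rw [ENNReal.rpow_add _ _ (haj j).1 (haj j).2, ENNReal.rpow_one]
            rw [e1]
            exact mul_le_mul_left (ENNReal.rpow_le_rpow hle hexp) _
        _ = T ^ ((n:ℝ)/lam - 1) * T := ENNReal.tsum_mul_left
        _ = T ^ (((n:ℝ)/lam - 1) + 1) := by
            rw [ENNReal.rpow_add _ _ hT0 htop, ENNReal.rpow_one]
        _ = T ^ ((n:ℝ)/lam) := by rw [sub_add_cancel]
    calc (volume S) ^ (lam/(n:ℝ)) ≤ (T ^ ((n:ℝ)/lam)) ^ (lam/(n:ℝ)) :=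
          ENNReal.rpow_le_rpow hvol (by positivity)
      _ = T := by
          rw [← ENNReal.rpow_mul]
          rw [show (n:ℝ)/lam * (lam/(n:ℝ)) = 1 by field_simp, ENNReal.rpow_one]
  calc volume S = ((volume S) ^ (lam/(n:ℝ))) ^ ((n:ℝ)/lam) := by
        rw [← ENNReal.rpow_mul, hprod, ENNReal.rpow_one]
    _ ≤ _ := ENNReal.rpow_le_rpow key (by positivity)

lemma content_level_le {n : ℕ} {lam : ℝ} {b : (Fin n → ℝ) → ℝ}
    (hcho : choquet n lam b ≤ 1) {s : ℝ} (hs : 0 < s) :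
    hausdorffContent n lam {y | s < b y} ≤ (ENNReal.ofReal s)⁻¹ := by
  set H := hausdorffContent n lam {y | s < b y} with hH
  have step : H * ENNReal.ofReal s ≤ choquet n lam b := by
    have hmono : ∀ t ∈ Set.Ioc (0:ℝ) s, H ≤ hausdorffContent n lam {y | t < b y} :=
      fun t ht => hausdorffContent_mono fun y hy => lt_of_le_of_lt ht.2 hy
    calc H * ENNReal.ofReal s = ∫⁻ _ in Set.Ioc (0:ℝ) s, H := by
          rw [setLIntegral_const, Real.volume_Ioc]
          simp
      _ ≤ ∫⁻ t in Set.Ioc (0:ℝ) s, hausdorffContent n lam {y | t < b y} :=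
          setLIntegral_mono' measurableSet_Ioc hmono
      _ ≤ ∫⁻ t in Set.Ioi (0:ℝ), hausdorffContent n lam {y | t < b y} :=
          lintegral_mono_set Set.Ioc_subset_Ioi_self
      _ = choquet n lam b := rfl
  exact ENNReal.le_inv_iff_mul_le.mpr (step.trans hcho)

lemma morrey_cube_bound {n : ℕ} {p lam : ℝ} (hp : 0 < p) (hl : 0 < lam)
    (f : (Fin n → ℝ) → ℝ) (c : Fin n → ℝ) {h : ℝ} (hh : 0 < h) :
    ∫⁻ x in Cube n c h, ENNReal.ofReal |f x| ^ p
      ≤ (morreyNorm n p lam f) ^ p * ENNReal.ofReal h ^ lam := by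
  set I := ∫⁻ x in Cube n c h, ENNReal.ofReal |f x| ^ p with hI
  have hle : (I / ENNReal.ofReal h ^ lam) ^ (1/p) ≤ morreyNorm n p lam f := by
    refine le_iSup_of_le c (le_iSup_of_le h ?_)
    exact le_iSup (fun _ : 0 < h => (I / ENNReal.ofReal h ^ lam) ^ (1/p)) hh
  have hle2 : I / ENNReal.ofReal h ^ lam ≤ (morreyNorm n p lam f) ^ p := by
    have h2 := ENNReal.rpow_le_rpow hle hp.le
    rwa [← ENNReal.rpow_mul, one_div, inv_mul_cancel₀ hp.ne', ENNReal.rpow_one] at h2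
  have hd0 : ENNReal.ofReal h ^ lam ≠ 0 :=
    (ENNReal.rpow_pos (ENNReal.ofReal_pos.2 hh) ENNReal.ofReal_ne_top).ne'
  have hdt : ENNReal.ofReal h ^ lam ≠ ⊤ :=
    (ENNReal.rpow_lt_top_of_nonneg hl.le ENNReal.ofReal_ne_top).ne
  rwa [ENNReal.div_le_iff hd0 hdt] at hle2

lemma morrey_set_bound {n : ℕ} {p lam : ℝ} (hp : 0 < p) (hl : 0 < lam)
    (f : (Fin n → ℝ) → ℝ) (hM0 : morreyNorm n p lam f ≠ 0) (hMt : morreyNorm n p lam f ≠ ⊤)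
    (S : Set (Fin n → ℝ)) :
    ∫⁻ x in S, ENNReal.ofReal |f x| ^ p
      ≤ (morreyNorm n p lam f) ^ p * hausdorffContent n lam S := by
  set M := morreyNorm n p lam f with hM
  have hMp0 : M ^ p ≠ 0 := (ENNReal.rpow_pos (pos_iff_ne_zero.mpr hM0) hMt).ne'
  have hMpt : M ^ p ≠ ⊤ := (ENNReal.rpow_lt_top_of_nonneg hp.le hMt).ne
  have key : (∫⁻ x in S, ENNReal.ofReal |f x| ^ p) / M ^ p ≤ hausdorffContent n lam S := by
    refine le_iInf fun c => le_iInf fun h => le_iInf fun hpos => le_iInf fun hcov => ?_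
    rw [ENNReal.div_le_iff hMp0 hMpt]
    calc ∫⁻ x in S, ENNReal.ofReal |f x| ^ p
        ≤ ∫⁻ x in ⋃ j, Cube n (c j) (h j), ENNReal.ofReal |f x| ^ p :=
          lintegral_mono_set hcov
      _ ≤ ∑' j, ∫⁻ x in Cube n (c j) (h j), ENNReal.ofReal |f x| ^ p :=
          lintegral_iUnion_le _ _
      _ ≤ ∑' j, M ^ p * ENNReal.ofReal (h j) ^ lam :=
          ENNReal.tsum_le_tsum fun j => morrey_cube_bound hp hl f (c j) (hpos j)
      _ = M ^ p * ∑' j, ENNReal.ofReal (h j) ^ lam := ENNReal.tsum_mul_left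
      _ = (∑' j, ENNReal.ofReal (h j) ^ lam) * M ^ p := mul_comm _ _
  rw [ENNReal.div_le_iff hMp0 hMpt] at key
  rwa [mul_comm] at key

lemma key_estimate {n : ℕ} {p lam : ℝ} (hp : 0 < p) (hl : 0 < lam)
    {f b : (Fin n → ℝ) → ℝ} (hf : Measurable f) (hb : Measurable b) (hbnn : ∀ x, 0 ≤ b x)
    (hcho : choquet n lam b ≤ 1)
    (hM0 : morreyNorm n p lam f ≠ 0) (hMt : morreyNorm n p lam f ≠ ⊤) :
    ∫⁻ x, ENNReal.ofReal |f x| ^ p * ENNReal.ofReal (b x)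
      ≤ (morreyNorm n p lam f) ^ p := by
  set F := fun x : Fin n → ℝ => ENNReal.ofReal |f x| ^ p with hF
  have hFm : Measurable F := (hf.abs.ennreal_ofReal).pow measurable_const
  have layer : ∫⁻ x, F x * ENNReal.ofReal (b x)
      = ∫⁻ t in Set.Ioi (0:ℝ), (volume.withDensity F) {x | t < b x} := by
    rw [← MeasureTheory.lintegral_eq_lintegral_meas_lt (volume.withDensity F)
      (Eventually.of_forall hbnn) hb.aemeasurable,
      lintegral_withDensity_eq_lintegral_mul _ hFm hb.ennreal_ofReal]
    rfl
  have happ : ∀ t : ℝ, (volume.withDensity F) {x | t < b x} = ∫⁻ x in {x | t < b x}, F x :=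
    fun t => withDensity_apply _ (hb measurableSet_Ioi)
  calc ∫⁻ x, F x * ENNReal.ofReal (b x)
      = ∫⁻ t in Set.Ioi (0:ℝ), (volume.withDensity F) {x | t < b x} := layer
    _ ≤ ∫⁻ t in Set.Ioi (0:ℝ),
        (morreyNorm n p lam f) ^ p * hausdorffContent n lam {x | t < b x} := by
        refine lintegral_mono fun t => ?_
        rw [happ t]
        exact morrey_set_bound hp hl f hM0 hMt _
    _ = (morreyNorm n p lam f) ^ p * choquet n lam b :=
        lintegral_const_mul' _ _ (ENNReal.rpow_lt_top_of_nonneg hp.le hMt).ne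
    _ ≤ (morreyNorm n p lam f) ^ p * 1 := mul_le_mul_right hcho _
    _ = (morreyNorm n p lam f) ^ p := mul_one _

lemma iUnion_bigCubes (n : ℕ) :
    (⋃ k : ℕ, Cube n (fun _ => -((k:ℝ)+1)) (2*((k:ℝ)+1))) = Set.univ := by
  refine Set.eq_univ_of_forall fun x => ?_
  obtain ⟨k, hk⟩ := exists_nat_gt ‖x‖
  refine Set.mem_iUnion.2 ⟨k, fun i => ?_⟩
  have hxi : |x i| ≤ ‖x‖ := by
    simpa [Real.norm_eq_abs] using norm_le_pi_norm x i
  have h1 : |x i| < (k:ℝ) + 1 := lt_of_le_of_lt hxi (hk.trans (by linarith))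
  rw [abs_lt] at h1
  constructor
  · exact h1.1.le
  · show x i ≤ -((k:ℝ)+1) + 2*((k:ℝ)+1)
    linarith [h1.2]

lemma morreyNorm_eq_zero {n : ℕ} {p lam : ℝ} (hp : 0 < p) (hl : 0 < lam)
    {f : (Fin n → ℝ) → ℝ} (hf : Measurable f) (hM : morreyNorm n p lam f = 0) :
    ∀ᵐ x : Fin n → ℝ, f x = 0 := by
  set F := fun x : Fin n → ℝ => ENNReal.ofReal |f x| ^ p with hF
  have hFm : Measurable F := (hf.abs.ennreal_ofReal).pow measurable_const
  have hcube : ∀ (c : Fin n → ℝ) (h : ℝ), 0 < h → ∫⁻ x in Cube n c h, F x = 0 := by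
    intro c h hh
    have hb := morrey_cube_bound hp hl f c hh
    rw [hM, ENNReal.zero_rpow_of_pos hp, zero_mul] at hb
    exact le_antisymm hb (zero_le)
  have hae : ∀ᵐ x : Fin n → ℝ, ∀ k : ℕ,
      x ∈ Cube n (fun _ => -((k:ℝ)+1)) (2*((k:ℝ)+1)) → F x = 0 := by
    rw [ae_all_iff]
    intro k
    exact (setLIntegral_eq_zero_iff (measurableSet_cube _ _ _) hFm).mp
      (hcube _ _ (by positivity))
  filter_upwards [hae] with x hx
  have hxmem : x ∈ ⋃ k : ℕ, Cube n (fun _ => -((k:ℝ)+1)) (2*((k:ℝ)+1)) := by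
    rw [iUnion_bigCubes]; trivial
  obtain ⟨k, hk⟩ := Set.mem_iUnion.mp hxmem
  have hF0 : F x = 0 := hx k hk
  have : ENNReal.ofReal |f x| = 0 := by
    rw [hF] at hF0
    exact (ENNReal.rpow_eq_zero_iff_of_pos hp).mp hF0
  rw [ENNReal.ofReal_eq_zero] at this
  exact abs_eq_zero.mp (le_antisymm this (abs_nonneg _))

lemma hNorm_ne_zero {n : ℕ} {q lam : ℝ} (hq : 1 < q) (hl : 0 < lam) (hln : lam < n)
    {g : (Fin n → ℝ) → ℝ} (hg : Measurable g) (hgnn : ∀ x, 0 ≤ g x)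
    (hne : ¬ (g =ᵐ[(volume : Measure (Fin n → ℝ))] 0)) : hNorm n q lam g ≠ 0 := by
  have hn : (0:ℝ) < n := hl.trans hln
  -- find a set of positive finite measure where g is bounded below
  have hpos : volume {x : Fin n → ℝ | g x ≠ 0} ≠ 0 := by
    intro h0
    exact hne (ae_iff.mpr h0)
  set S : ℕ → Set (Fin n → ℝ) :=
    fun k => {x | 1/((k:ℝ)+1) < g x} ∩ Metric.ball (0 : Fin n → ℝ) ((k:ℝ)+1) with hS
  have hcover : {x : Fin n → ℝ | g x ≠ 0} ⊆ ⋃ k, S k := by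
    intro x hx
    have hgx : 0 < g x := lt_of_le_of_ne (hgnn x) (Ne.symm hx)
    obtain ⟨k, hk⟩ := exists_nat_gt (max (1/(g x)) ‖x‖)
    refine Set.mem_iUnion.2 ⟨k, ?_, ?_⟩
    · have h1 : 1/(g x) < (k:ℝ)+1 := (le_max_left _ _).trans_lt (hk.trans (by linarith))
      have hk1 : (0:ℝ) < (k:ℝ)+1 := by positivity
      rw [div_lt_iff₀ hgx] at h1
      rw [Set.mem_setOf_eq, div_lt_iff₀ hk1]
      linarith [h1]
    · have h2 : ‖x‖ < (k:ℝ)+1 := (le_max_right _ _).trans_lt (hk.trans (by linarith))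
      simpa [Metric.mem_ball, dist_zero_right] using h2
  have hSk : ∃ k, volume (S k) ≠ 0 := by
    by_contra hall
    push_neg at hall
    exact hpos (le_antisymm ((measure_mono hcover).trans
      (le_of_eq (measure_iUnion_null hall))) (zero_le))
  obtain ⟨k, hSk⟩ := hSk
  set E := S k with hE
  set ε : ℝ := 1/((k:ℝ)+1) with hε
  have hε0 : 0 < ε := by positivity
  have hEt : volume E < ⊤ :=
    lt_of_le_of_lt (measure_mono Set.inter_subset_right) measure_ball_lt_top
  have hEm : MeasurableSet E := (hg measurableSet_Ioi).inter Metric.isOpen_ball.measurableSet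
  set c : ℝ≥0∞ := volume E / 2 with hc
  have hc0 : c ≠ 0 := by
    rw [hc, Ne, ENNReal.div_eq_zero_iff]
    rintro (h | h)
    · exact hSk h
    · exact ENNReal.ofNat_ne_top h
  have hct : c ≠ ⊤ := (lt_of_le_of_lt ENNReal.half_le_self hEt).ne
  -- choose s
  have hcr : c ^ (-(lam/(n:ℝ))) ≠ ⊤ := by
    rw [ENNReal.rpow_neg]
    exact (ENNReal.inv_lt_top.2 (ENNReal.rpow_pos (pos_iff_ne_zero.mpr hc0) hct)).ne
  set s : ℝ := (c ^ (-(lam/(n:ℝ)))).toReal + 1 with hs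
  have hs0 : 0 < s := by positivity
  have hsc : c ^ (-(lam/(n:ℝ))) ≤ ENNReal.ofReal s := by
    refine (ENNReal.le_ofReal_iff_toReal_le hcr hs0.le).2 ?_
    exact le_add_of_nonneg_right zero_le_one
  -- volume of {s < b} is small, for every b in the basis
  have hδ : ∀ b ∈ MorreyBasis n lam,
      (ENNReal.ofReal ε ^ q * ENNReal.ofReal s ^ (-(q-1)) * c) ^ (1/q)
        ≤ (∫⁻ x, ENNReal.ofReal |g x| ^ q * ENNReal.ofReal (b x) ^ (-(q - 1))) ^ (1/q) := by
    intro b hbB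
    obtain ⟨⟨C, hCt, ⟨⟨hbm, hbnn, _, _⟩, _⟩⟩, hcho⟩ := hbB
    refine ENNReal.rpow_le_rpow ?_ (by positivity)
    have hvol_level : volume {x : Fin n → ℝ | s < b x} ≤ c := by
      calc volume {x : Fin n → ℝ | s < b x}
          ≤ (hausdorffContent n lam {x | s < b x}) ^ ((n:ℝ)/lam) :=
            volume_le_rpow_content hl hln _
        _ ≤ ((ENNReal.ofReal s)⁻¹) ^ ((n:ℝ)/lam) :=
            ENNReal.rpow_le_rpow (content_level_le hcho hs0) (by positivity)
        _ ≤ ((c ^ (-(lam/(n:ℝ))))⁻¹) ^ ((n:ℝ)/lam) :=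
            ENNReal.rpow_le_rpow (ENNReal.inv_le_inv.2 hsc) (by positivity)
        _ = c := by
            rw [ENNReal.rpow_neg, inv_inv, ← ENNReal.rpow_mul,
              show lam/(n:ℝ) * ((n:ℝ)/lam) = 1 by field_simp, ENNReal.rpow_one]
    set A := E ∩ {x : Fin n → ℝ | b x ≤ s} with hA
    have hAm : MeasurableSet A := hEm.inter (hbm measurableSet_Iic)
    have hAvol : c ≤ volume A := by
      have hsplit : volume E ≤ volume A + c := by
        have : E ⊆ A ∪ (E ∩ {x | s < b x}) := by
          intro x hx
          rcases le_or_gt (b x) s with hbs | hbs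
          · exact Or.inl ⟨hx, hbs⟩
          · exact Or.inr ⟨hx, hbs⟩
        calc volume E ≤ volume (A ∪ (E ∩ {x | s < b x})) := measure_mono this
          _ ≤ volume A + volume (E ∩ {x | s < b x}) := measure_union_le _ _
          _ ≤ volume A + c := by
              exact add_le_add_right ((measure_mono Set.inter_subset_right).trans hvol_level) _
      have h2 : volume E - c ≤ volume A := tsub_le_iff_right.mpr hsplit
      rwa [hc, ENNReal.sub_half hEt.ne] at h2
    calc ENNReal.ofReal ε ^ q * ENNReal.ofReal s ^ (-(q-1)) * c
        ≤ ENNReal.ofReal ε ^ q * ENNReal.ofReal s ^ (-(q-1)) * volume A :=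
          mul_le_mul_right hAvol _
      _ = ∫⁻ _ in A, ENNReal.ofReal ε ^ q * ENNReal.ofReal s ^ (-(q-1)) :=
          (setLIntegral_const _ _).symm
      _ ≤ ∫⁻ x in A, ENNReal.ofReal |g x| ^ q * ENNReal.ofReal (b x) ^ (-(q - 1)) := by
          refine setLIntegral_mono' hAm fun x hx => ?_
          obtain ⟨⟨hxE, _⟩, hxb⟩ := hx
          refine mul_le_mul' ?_ ?_
          · refine ENNReal.rpow_le_rpow (ENNReal.ofReal_le_ofReal ?_) (by positivity)
            rw [abs_of_nonneg (hgnn x)]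
            exact le_of_lt hxE
          · exact ennreal_rpow_le_rpow_of_nonpos (ENNReal.ofReal_le_ofReal hxb)
              (by simp; linarith)
      _ ≤ ∫⁻ x, ENNReal.ofReal |g x| ^ q * ENNReal.ofReal (b x) ^ (-(q - 1)) :=
          setLIntegral_le_lintegral _ _
  -- conclude
  intro h0
  have hlow : (ENNReal.ofReal ε ^ q * ENNReal.ofReal s ^ (-(q-1)) * c) ^ (1/q)
      ≤ hNorm n q lam g :=
    le_iInf fun b => le_iInf fun hb => hδ b hb
  rw [h0, le_zero_iff] at hlow
  have hd0 : ENNReal.ofReal ε ^ q * ENNReal.ofReal s ^ (-(q-1)) * c ≠ 0 := by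
    refine mul_ne_zero (mul_ne_zero ?_ ?_) hc0
    · exact (ENNReal.rpow_pos (ENNReal.ofReal_pos.2 hε0) ENNReal.ofReal_ne_top).ne'
    · exact (ENNReal.rpow_pos (ENNReal.ofReal_pos.2 hs0) ENNReal.ofReal_ne_top).ne'
  exact hd0 ((ENNReal.rpow_eq_zero_iff_of_pos (by positivity)).mp hlow)

end AuxHolder

/-- Hölder-type inequality `∫ f g ≤ C ‖f‖_{L^{p,λ}} ‖g‖_{H^{p',λ}}`. -/
theorem morrey_hNorm_holder (n : ℕ) (p lam : ℝ) (hp : 1 < p) (h1 : 0 < lam) (h2 : lam < n) :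
    ∃ C : ℝ≥0∞, 0 < C ∧ C ≠ ⊤ ∧ ∀ f g : (Fin n → ℝ) → ℝ,
      Measurable f → Measurable g → (∀ x, 0 ≤ f x) → (∀ x, 0 ≤ g x) →
      ∫⁻ x, ENNReal.ofReal (f x) * ENNReal.ofReal (g x)
        ≤ C * (morreyNorm n p lam f * hNorm n (p/(p-1)) lam g) := by
  have hp0 : 0 < p := lt_trans zero_lt_one hp
  set q : ℝ := p / (p-1) with hqdef
  have hpq : p.HolderConjugate q := (Real.holderConjugate_iff_eq_conjExponent hp).2 hqdef
  have hq1 : 1 < q := by rw [hqdef, one_lt_div (by linarith)]; linarith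
  have hq0 : 0 < q := lt_trans zero_lt_one hq1
  refine ⟨1, zero_lt_one, one_ne_top, ?_⟩
  intro f g hfm hgm hfnn hgnn
  rw [one_mul]
  by_cases hM0 : morreyNorm n p lam f = 0
  · have hf0 := morreyNorm_eq_zero hp0 h1 hfm hM0
    have hz : ∫⁻ x, ENNReal.ofReal (f x) * ENNReal.ofReal (g x) = 0 := by
      rw [← lintegral_zero]
      refine lintegral_congr_ae (hf0.mono fun x hx => ?_)
      simp [hx]
    rw [hz]
    exact zero_le
  by_cases hMt : morreyNorm n p lam f = ⊤
  · by_cases hH0 : hNorm n q lam g = 0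
    · have hg0 : g =ᵐ[(volume : Measure (Fin n → ℝ))] 0 := by
        by_contra hne
        exact hNorm_ne_zero hq1 h1 h2 hgm hgnn hne hH0
      have hz : ∫⁻ x, ENNReal.ofReal (f x) * ENNReal.ofReal (g x) = 0 := by
        rw [← lintegral_zero]
        refine lintegral_congr_ae (hg0.mono fun x hx => ?_)
        simp only [Pi.zero_apply] at hx
        simp [hx]
      rw [hz]
      exact zero_le
    · rw [hMt, ENNReal.top_mul hH0]
      exact le_top
  -- main case
  set M := morreyNorm n p lam f with hM
  have per_b : ∀ b ∈ MorreyBasis n lam,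
      (∫⁻ x, ENNReal.ofReal (f x) * ENNReal.ofReal (g x))
        ≤ M * (∫⁻ x, ENNReal.ofReal |g x| ^ q * ENNReal.ofReal (b x) ^ (-(q - 1))) ^ (1/q) := by
    intro b hbB
    obtain ⟨⟨C, hCt, ⟨⟨hbm, hbnn, _, _⟩, _⟩⟩, hcho⟩ := hbB
    set B := fun x : Fin n → ℝ => ENNReal.ofReal (b x) with hB
    set I := ∫⁻ x, ENNReal.ofReal |g x| ^ q * B x ^ (-(q - 1)) with hI
    by_cases hItop : I = ⊤
    · rw [hItop, ENNReal.top_rpow_of_pos (by positivity : (0:ℝ) < 1/q), ENNReal.mul_top hM0]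
      exact le_top
    have hGm : Measurable fun x => ENNReal.ofReal |g x| ^ q * B x ^ (-(q - 1)) :=
      ((hgm.abs.ennreal_ofReal).pow measurable_const).mul
        ((hbm.ennreal_ofReal).pow measurable_const)
    have hae : ∀ᵐ x : Fin n → ℝ, ENNReal.ofReal |g x| ^ q * B x ^ (-(q - 1)) < ⊤ :=
      ae_lt_top hGm hItop
    have hpt : ∀ᵐ x : Fin n → ℝ, ENNReal.ofReal (f x) * ENNReal.ofReal (g x)
        ≤ (ENNReal.ofReal (f x) * B x ^ (1/p)) * (ENNReal.ofReal (g x) * B x ^ (-(1/p))) := by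
      filter_upwards [hae] with x hx
      rcases eq_or_lt_of_le (hbnn x) with hb0 | hbpos
      · have hBx : B x = 0 := by simp [hB, ← hb0]
        have hgx0 : ENNReal.ofReal (g x) = 0 := by
          by_contra hgx
          have hgq : ENNReal.ofReal |g x| ^ q ≠ 0 := by
            rw [abs_of_nonneg (hgnn x)]
            exact (ENNReal.rpow_pos (pos_iff_ne_zero.mpr hgx) ENNReal.ofReal_ne_top).ne'
          have htop : ENNReal.ofReal |g x| ^ q * B x ^ (-(q - 1)) = ⊤ := by
            rw [hBx, ENNReal.zero_rpow_of_neg (by linarith), ENNReal.mul_top hgq]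
          rw [htop] at hx
          exact absurd hx (lt_irrefl _)
        rw [hgx0, mul_zero]
        exact zero_le
      · have hB0 : B x ≠ 0 := (ENNReal.ofReal_pos.2 hbpos).ne'
        have hBt : B x ≠ ⊤ := ENNReal.ofReal_ne_top
        have hone : B x ^ (1/p) * B x ^ (-(1/p)) = 1 := by
          rw [← ENNReal.rpow_add _ _ hB0 hBt]
          simp
        rw [mul_mul_mul_comm, hone, mul_one]
    have holder := ENNReal.lintegral_mul_le_Lp_mul_Lq volume hpq
      (f := fun x => ENNReal.ofReal (f x) * B x ^ (1/p))
      (g := fun x => ENNReal.ofReal (g x) * B x ^ (-(1/p)))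
      (((hfm.ennreal_ofReal).mul ((hbm.ennreal_ofReal).pow measurable_const)).aemeasurable)
      (((hgm.ennreal_ofReal).mul ((hbm.ennreal_ofReal).pow measurable_const)).aemeasurable)
    have e1 : ∫⁻ x, (ENNReal.ofReal (f x) * B x ^ (1/p)) ^ p
        = ∫⁻ x, ENNReal.ofReal |f x| ^ p * B x := by
      refine lintegral_congr fun x => ?_
      rw [ENNReal.mul_rpow_of_nonneg _ _ hp0.le, ← ENNReal.rpow_mul, one_div,
        inv_mul_cancel₀ hp0.ne', ENNReal.rpow_one, abs_of_nonneg (hfnn x)]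
    have e2 : ∫⁻ x, (ENNReal.ofReal (g x) * B x ^ (-(1/p))) ^ q = I := by
      refine lintegral_congr fun x => ?_
      rw [ENNReal.mul_rpow_of_nonneg _ _ hq0.le, ← ENNReal.rpow_mul,
        abs_of_nonneg (hgnn x)]
      congr 2
      rw [hqdef]
      have hp1 : p - 1 ≠ 0 := sub_ne_zero.mpr (ne_of_gt hp)
      field_simp
      ring
    calc ∫⁻ x, ENNReal.ofReal (f x) * ENNReal.ofReal (g x)
        ≤ ∫⁻ x, (ENNReal.ofReal (f x) * B x ^ (1/p))
            * (ENNReal.ofReal (g x) * B x ^ (-(1/p))) := lintegral_mono_ae hpt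
      _ ≤ (∫⁻ x, (ENNReal.ofReal (f x) * B x ^ (1/p)) ^ p) ^ (1/p)
          * (∫⁻ x, (ENNReal.ofReal (g x) * B x ^ (-(1/p))) ^ q) ^ (1/q) := by
          simpa only [Pi.mul_apply] using holder
      _ = (∫⁻ x, ENNReal.ofReal |f x| ^ p * B x) ^ (1/p) * I ^ (1/q) := by rw [e1, e2]
      _ ≤ (M ^ p) ^ (1/p) * I ^ (1/q) := by
          refine mul_le_mul_left (ENNReal.rpow_le_rpow ?_ (by positivity)) _
          exact key_estimate hp0 h1 hfm hbm hbnn hcho hM0 hMt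
      _ = M * I ^ (1/q) := by
          rw [← ENNReal.rpow_mul, mul_one_div, div_self hp0.ne', ENNReal.rpow_one]
  have hdiv : (∫⁻ x, ENNReal.ofReal (f x) * ENNReal.ofReal (g x)) / M ≤ hNorm n q lam g := by
    refine le_iInf fun b => le_iInf fun hb => ?_
    rw [ENNReal.div_le_iff hM0 hMt]
    rw [mul_comm]
    exact per_b b hb
  rw [ENNReal.div_le_iff hM0 hMt] at hdiv
  rwa [mul_comm] at hdiv
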